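/- arXiv:2308.09301 — 8 statements merged into one kernel-verified Lean document; each statement's English description precedes it below -/
import Mathlib

section
/- Let (S, E, T) be a closed and consistent observation table over input alphabet Σ and output alphabet O, and let (Q̂, q̂0, δ̂, L̂) be its hypothesis Moore machine. Then for every sequence s ∈ S ∪ {s·σ : s ∈ S, σ ∈ Σ}, the extended transition function satisfies δ̂*(q̂0, s) = row(s). -/
/-- A Moore machine over input alphabet `σ` and output alphabet `O`, with state type `Q`:
initial state `q0`, transition function `δ`, and output labeling `L`. -/
structure MooreMachine (σ O Q : Type*) where
  q0 : Q
  δ : Q → σ → Q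
  L : Q → O

/-- `M.run q w` is the extended transition function `δ*(q, w)`, the left fold of `δ` over `w`. -/
def MooreMachine.run {σ O Q : Type*} (M : MooreMachine σ O Q) (q : Q) (w : List σ) : Q :=
  w.foldl M.δ q

/-- An observation table `(S, E, T)`: finite sets of prefixes `S` (prefix-closed, containing ε)
and suffixes `E` (suffix-closed, containing ε), and an entry function `T`. -/
structure ObsTable (σ O : Type*) where
  S : Finset (List σ)
  E : Finset (List σ)
  T : List σ → O
  nil_mem_S : [] ∈ S
  prefixClosed : ∀ s ∈ S, ∀ t : List σ, t <+: s → t ∈ S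
  nil_mem_E : [] ∈ E
  suffixClosed : ∀ e ∈ E, ∀ t : List σ, t <:+ e → t ∈ E

/-- `row(s) : E → O`, given by `row(s)(e) = T(s·e)`. -/
def ObsTable.row {σ O : Type*} (Ot : ObsTable σ O) (s : List σ) : {e // e ∈ Ot.E} → O :=
  fun e => Ot.T (s ++ e.1)

/-- The table is closed if every `row(s·σ)` with `s ∈ S` coincides with `row(s')` for some `s' ∈ S`. -/
def ObsTable.Closed {σ O : Type*} (Ot : ObsTable σ O) : Prop :=
  ∀ s ∈ Ot.S, ∀ a : σ, ∃ s' ∈ Ot.S, Ot.row (s ++ [a]) = Ot.row s'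

/-- The table is consistent if equal rows of elements of `S` have equal one-step extensions. -/
def ObsTable.Consistent {σ O : Type*} (Ot : ObsTable σ O) : Prop :=
  ∀ s₁ ∈ Ot.S, ∀ s₂ ∈ Ot.S,
    Ot.row s₁ = Ot.row s₂ → ∀ a : σ, Ot.row (s₁ ++ [a]) = Ot.row (s₂ ++ [a])

/-- `s ∈ S ∪ {t·σ : t ∈ S, σ ∈ Σ}`, the rows of the observation table. -/
def ObsTable.InTableRows {σ O : Type*} (Ot : ObsTable σ O) (s : List σ) : Prop :=
  s ∈ Ot.S ∨ ∃ t ∈ Ot.S, ∃ a : σ, s = t ++ [a]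

/-- The state set of the hypothesis machine: `Q̂ = {row(s) : s ∈ S}`. -/
def ObsTable.HQ {σ O : Type*} (Ot : ObsTable σ O) : Type _ :=
  {f : {e // e ∈ Ot.E} → O // ∃ s ∈ Ot.S, Ot.row s = f}

/-- The hypothesis state `row(s)` for `s ∈ S`. -/
def ObsTable.stateOf {σ O : Type*} (Ot : ObsTable σ O) (s : List σ) (hs : s ∈ Ot.S) : Ot.HQ :=
  ⟨Ot.row s, s, hs, rfl⟩

/-- `M` is the hypothesis Moore machine of the table: its initial state is `row(ε)`,
its transitions satisfy `δ̂(row(s), σ) = row(s·σ)` for `s ∈ S`, and its outputs satisfy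
`L̂(row(s)) = row(s)(ε) = T(s)` for `s ∈ S`. -/
def ObsTable.IsHypothesis {σ O : Type*} (Ot : ObsTable σ O)
    (M : MooreMachine σ O Ot.HQ) : Prop :=
  M.q0 = Ot.stateOf [] Ot.nil_mem_S ∧
  (∀ s, ∀ hs : s ∈ Ot.S, ∀ a : σ, (M.δ (Ot.stateOf s hs) a).1 = Ot.row (s ++ [a])) ∧
  (∀ s, ∀ hs : s ∈ Ot.S, M.L (Ot.stateOf s hs) = Ot.T s)

/-- The number of states of the hypothesis machine: the number of distinct rows `row(s)`, `s ∈ S`. -/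
def ObsTable.numStates {σ O : Type*} [DecidableEq O] (Ot : ObsTable σ O) : ℕ :=
  (Ot.S.image Ot.row).card

/-- A Moore machine is consistent with the table if `L(δ*(q0, s·e)) = T(s·e)` for every
`s ∈ S ∪ S·Σ` and every `e ∈ E`. -/
def MooreMachine.ConsistentWith {σ O Q : Type*} (M : MooreMachine σ O Q)
    (Ot : ObsTable σ O) : Prop :=
  ∀ s : List σ, Ot.InTableRows s → ∀ e ∈ Ot.E, M.L (M.run M.q0 (s ++ e)) = Ot.T (s ++ e)

/-- `M` computes `f : Σ* → O` if `f(w) = L(δ*(q0, w))` for all `w`. -/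
def MooreMachine.Computes {σ O Q : Type*} (M : MooreMachine σ O Q) (f : List σ → O) : Prop :=
  ∀ w : List σ, f w = M.L (M.run M.q0 w)

/-- `φ` is an isomorphism of Moore machines: a bijection on states preserving the initial
state, the transitions, and the output labeling. -/
def MooreIso {σ O Q₁ Q₂ : Type*} (M₁ : MooreMachine σ O Q₁) (M₂ : MooreMachine σ O Q₂)
    (φ : Q₁ → Q₂) : Prop :=
  Function.Bijective φ ∧ φ M₁.q0 = M₂.q0 ∧
    (∀ q a, φ (M₁.δ q a) = M₂.δ (φ q) a) ∧ ∀ q, M₂.L (φ q) = M₁.L q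

/-- For a closed and consistent observation table and its hypothesis Moore
machine, the extended transition function satisfies `δ̂*(q̂0, s) = row(s)` for every
`s ∈ S ∪ {s·σ : s ∈ S, σ ∈ Σ}`. -/
theorem hypothesis_run_eq_row {σ O : Type*} [Fintype σ] [Nonempty σ] [Fintype O] [Nonempty O]
    (Ot : ObsTable σ O) (hclosed : Ot.Closed) (hcons : Ot.Consistent)
    (M : MooreMachine σ O Ot.HQ) (hM : Ot.IsHypothesis M) :
    ∀ s : List σ, Ot.InTableRows s → (M.run M.q0 s).1 = Ot.row s := by

  have step : ∀ t (ht : t ∈ Ot.S) (a : σ),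
      (M.run M.q0 t).1 = Ot.row t → (M.run M.q0 (t ++ [a])).1 = Ot.row (t ++ [a]) := by
    intro t ht a ih
    have hrun : M.run M.q0 (t ++ [a]) = M.δ (M.run M.q0 t) a := by
      simp [MooreMachine.run]
    obtain ⟨s', hs', hrow⟩ := (M.run M.q0 t).2
    have hq : M.run M.q0 t = Ot.stateOf s' hs' := by
      apply Subtype.ext
      simp [ObsTable.stateOf, hrow]
    rw [hrun, hq, hM.2.1 s' hs' a]
    exact hcons s' hs' t ht (hrow.trans ih) a
  have aux : ∀ t, t ∈ Ot.S → (M.run M.q0 t).1 = Ot.row t := by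
    intro t
    induction t using List.reverseRecOn with
    | nil => intro _; simp [MooreMachine.run, hM.1, ObsTable.stateOf]; rfl
    | append_singleton u a ihu =>
      intro hu
      have hu' : u ∈ Ot.S := Ot.prefixClosed _ hu u ⟨[a], rfl⟩
      exact step u hu' a (ihu hu')
  intro s hs
  rcases hs with hs | ⟨t, ht, a, rfl⟩
  · exact aux s hs
  · exact step t ht a (aux t ht)
end

section
/- Let (S, E, T) be a closed and consistent observation table over input alphabet Σ and output alphabet O, and let (Q̂, q̂0, δ̂, L̂) be its hypothesis Moore machine. Then the hypothesis machine agrees with the table on all of its entries: for every s ∈ S ∪ {s·σ : s ∈ S, σ ∈ Σ} and every e ∈ E, L̂(δ̂*(q̂0, s·e)) = T(s·e). -/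
/-- The hypothesis Moore machine of a closed and consistent observation table
agrees with the table on all of its entries: `L̂(δ̂*(q̂0, s·e)) = T(s·e)` for every
`s ∈ S ∪ {s·σ : s ∈ S, σ ∈ Σ}` and every `e ∈ E`. -/
theorem hypothesis_agrees_with_table {σ O : Type*} [Fintype σ] [Nonempty σ]
    [Fintype O] [Nonempty O]
    (Ot : ObsTable σ O) (hclosed : Ot.Closed) (hcons : Ot.Consistent)
    (M : MooreMachine σ O Ot.HQ) (hM : Ot.IsHypothesis M) :
    ∀ s : List σ, Ot.InTableRows s →
      ∀ e ∈ Ot.E, M.L (M.run M.q0 (s ++ e)) = Ot.T (s ++ e) := by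
  obtain ⟨hq0, hδ, hL⟩ := hM
  -- run from the initial state along s ∈ S reaches stateOf s
  have hrun : ∀ s : List σ, ∀ hs : s ∈ Ot.S, M.run M.q0 s = Ot.stateOf s hs := by
    intro s
    induction s using List.reverseRecOn with
    | nil => intro _; simpa [MooreMachine.run] using hq0
    | append_singleton t a ih =>
      intro hs
      have ht : t ∈ Ot.S := Ot.prefixClosed _ hs t ⟨[a], rfl⟩
      have : M.run M.q0 (t ++ [a]) = M.δ (M.run M.q0 t) a := by
        simp [MooreMachine.run]
      rw [this, ih ht]
      apply Subtype.ext
      rw [hδ t ht a]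
      rfl
  -- reading e ∈ E from stateOf t gives output T (t ++ e)
  have main : ∀ e ∈ Ot.E, ∀ t : List σ, ∀ ht : t ∈ Ot.S,
      M.L (M.run (Ot.stateOf t ht) e) = Ot.T (t ++ e) := by
    intro e
    induction e with
    | nil =>
      intro _ t ht
      simpa [MooreMachine.run] using hL t ht
    | cons a e' ih =>
      intro he t ht
      have he' : e' ∈ Ot.E := Ot.suffixClosed _ he e' ⟨[a], rfl⟩
      obtain ⟨t', ht', hrow⟩ := hclosed t ht a
      have hstate : M.δ (Ot.stateOf t ht) a = Ot.stateOf t' ht' := by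
        apply Subtype.ext
        rw [hδ t ht a, hrow]; rfl
      have : M.run (Ot.stateOf t ht) (a :: e') = M.run (Ot.stateOf t' ht') e' := by
        simp [MooreMachine.run, hstate]
      rw [this, ih he' t' ht']
      have := congrFun hrow ⟨e', he'⟩
      simp only [ObsTable.row] at this
      rw [← this]
      simp
  intro s hs e he
  rcases hs with hs | ⟨t, ht, a, rfl⟩
  · have h1 : M.run M.q0 (s ++ e) = M.run (M.run M.q0 s) e := by
      simp [MooreMachine.run]
    rw [h1, hrun s hs, main e he s hs]
  · obtain ⟨t', ht', hrow⟩ := hclosed t ht a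
    have hstate : M.δ (Ot.stateOf t ht) a = Ot.stateOf t' ht' := by
      apply Subtype.ext
      rw [hδ t ht a, hrow]; rfl
    have h1 : M.run M.q0 ((t ++ [a]) ++ e) = M.run (M.δ (M.run M.q0 t) a) e := by
      simp [MooreMachine.run]
    rw [h1, hrun t ht, hstate, main e he t' ht']
    have := congrFun hrow ⟨e, he⟩
    simp only [ObsTable.row] at this
    rw [← this]
end

section
/- Let (S, E, T) be a closed and consistent observation table over input alphabet Σ and output alphabet O, and let (Q̂, q̂0, δ̂, L̂) be its hypothesis Moore machine. Then any two distinct states of the hypothesis machine are distinguished by a suffix in E: for all s1, s2 ∈ S with row(s1) ≠ row(s2), there exists e ∈ E such that L̂(δ̂*(row(s1), e)) ≠ L̂(δ̂*(row(s2), e)). -/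
/-- In the hypothesis machine of a closed and consistent observation table,
any two distinct states are distinguished by a suffix in `E`: for `s₁, s₂ ∈ S` with
`row(s₁) ≠ row(s₂)`, there is `e ∈ E` with `L̂(δ̂*(row(s₁), e)) ≠ L̂(δ̂*(row(s₂), e))`. -/
theorem hypothesis_states_distinguished {σ O : Type*} [Fintype σ] [Nonempty σ]
    [Fintype O] [Nonempty O]
    (Ot : ObsTable σ O) (hclosed : Ot.Closed) (hcons : Ot.Consistent)
    (M : MooreMachine σ O Ot.HQ) (hM : Ot.IsHypothesis M) :
    ∀ s₁, ∀ h₁ : s₁ ∈ Ot.S, ∀ s₂, ∀ h₂ : s₂ ∈ Ot.S, Ot.row s₁ ≠ Ot.row s₂ →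
      ∃ e ∈ Ot.E,
        M.L (M.run (Ot.stateOf s₁ h₁) e) ≠ M.L (M.run (Ot.stateOf s₂ h₂) e) := by
  have key : ∀ e : List σ, e ∈ Ot.E → ∀ s, ∀ hs : s ∈ Ot.S,
      M.L (M.run (Ot.stateOf s hs) e) = Ot.T (s ++ e) := by
    intro e
    induction e with
    | nil =>
      intro _ s hs
      simpa [MooreMachine.run] using hM.2.2 s hs
    | cons a e' ih =>
      intro he s hs
      have he' : e' ∈ Ot.E := Ot.suffixClosed _ he e' ⟨[a], rfl⟩
      obtain ⟨s', hs', hrow⟩ := hclosed s hs a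
      have hδ : M.δ (Ot.stateOf s hs) a = Ot.stateOf s' hs' := by
        apply Subtype.ext
        rw [hM.2.1 s hs a, hrow]; rfl
      have : M.run (Ot.stateOf s hs) (a :: e') = M.run (Ot.stateOf s' hs') e' := by
        simp [MooreMachine.run, hδ]
      rw [this, ih he' s' hs']
      have := congrFun hrow.symm ⟨e', he'⟩
      simpa [ObsTable.row] using this
  intro s₁ h₁ s₂ h₂ hne
  have : ∃ e : {e // e ∈ Ot.E}, Ot.row s₁ e ≠ Ot.row s₂ e := by
    by_contra h
    push_neg at h
    exact hne (funext h)
  obtain ⟨⟨e, he⟩, hd⟩ := this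
  refine ⟨e, he, ?_⟩
  rw [key e he s₁ h₁, key e he s₂ h₂]
  exact hd
end

section
/- Let (S, E, T) be a closed and consistent observation table over input alphabet Σ and output alphabet O, and let n be the number of distinct rows row(s) for s ∈ S (the number of states of the hypothesis Moore machine). Then every Moore machine (Q, q0, δ, L) over (Σ, O) that is consistent with the table has at least n states: |Q| ≥ n. -/
/-- Any Moore machine consistent with a closed and consistent observation
table has at least `n` states, where `n` is the number of distinct rows `row(s)`, `s ∈ S`
(the number of states of the hypothesis machine). -/
theorem consistent_machine_card_ge_numStates {σ O : Type*} [Fintype σ] [Nonempty σ]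
    [Fintype O] [Nonempty O] [DecidableEq O]
    (Ot : ObsTable σ O) (hclosed : Ot.Closed) (hcons : Ot.Consistent)
    {Q : Type*} [Fintype Q] (M : MooreMachine σ O Q) (hM : M.ConsistentWith Ot) :
    Ot.numStates ≤ Fintype.card Q := by
  classical
  -- map each state to the "row it induces"
  set g : Q → ({e // e ∈ Ot.E} → O) := fun q e => M.L (M.run q e.1) with hg
  have hrow : ∀ s ∈ Ot.S, g (M.run M.q0 s) = Ot.row s := by
    intro s hs
    funext e
    have h1 : M.run M.q0 (s ++ e.1) = M.run (M.run M.q0 s) e.1 := by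
      simp [MooreMachine.run, List.foldl_append]
    have h2 := hM s (Or.inl hs) e.1 e.2
    simp only [hg]
    rw [← h1, h2]
    rfl
  have himg : Ot.S.image Ot.row = (Ot.S.image (fun s => M.run M.q0 s)).image g := by
    rw [Finset.image_image]
    apply Finset.image_congr
    intro s hs
    exact (hrow s hs).symm
  calc Ot.numStates = ((Ot.S.image (fun s => M.run M.q0 s)).image g).card := by
        rw [ObsTable.numStates, himg]
    _ ≤ (Ot.S.image (fun s => M.run M.q0 s)).card := Finset.card_image_le
    _ ≤ Fintype.card Q := Finset.card_le_univ _
end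

section
/- Let (S, E, T) be a closed and consistent observation table over input alphabet Σ and output alphabet O, let (Q̂, q̂0, δ̂, L̂) be its hypothesis Moore machine, and let n = |Q̂| be its number of states. Then every Moore machine (Q, q0, δ, L) over (Σ, O) with at most n states that is consistent with the table is isomorphic to the hypothesis machine. -/
universe u

lemma row_eq_of_run_eq {σ O Q : Type*} (Ot : ObsTable σ O) (M' : MooreMachine σ O Q)
    (hM' : M'.ConsistentWith Ot) {s1 s2 : List σ}
    (h1 : Ot.InTableRows s1) (h2 : Ot.InTableRows s2)
    (hr : M'.run M'.q0 s1 = M'.run M'.q0 s2) : Ot.row s1 = Ot.row s2 := by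
  funext e
  have e1 := hM' s1 h1 e.1 e.2
  have e2 := hM' s2 h2 e.1 e.2
  have hrun : ∀ s : List σ, M'.run M'.q0 (s ++ e.1) = M'.run (M'.run M'.q0 s) e.1 := by
    intro s; simp [MooreMachine.run, List.foldl_append]
  show Ot.T (s1 ++ e.1) = Ot.T (s2 ++ e.1)
  rw [← e1, ← e2, hrun, hrun, hr]

/-- Every Moore machine with at most `n = |Q̂|` states that is consistent with
a closed and consistent observation table is isomorphic to the hypothesis machine. -/
theorem consistent_machine_iso_hypothesis {σ O : Type*} [Fintype σ] [Nonempty σ]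
    [Fintype O] [Nonempty O] [DecidableEq O]
    (Ot : ObsTable σ O) (hclosed : Ot.Closed) (hcons : Ot.Consistent)
    (M : MooreMachine σ O Ot.HQ) (hM : Ot.IsHypothesis M)
    {Q : Type u} [Fintype Q] (M' : MooreMachine σ O Q)
    (hcard : Fintype.card Q ≤ Ot.numStates) (hM' : M'.ConsistentWith Ot) :
    ∃ φ : Q → Ot.HQ, MooreIso M' M φ := by
  classical
  set r : List σ → Q := fun s => M'.run M'.q0 s with hr_def
  -- auxiliary map from states to rows
  set h : Q → ({e // e ∈ Ot.E} → O) := fun q =>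
    if hq : ∃ s ∈ Ot.S, r s = q then Ot.row hq.choose else fun _ => Classical.arbitrary O
    with hh_def
  have hh : ∀ s ∈ Ot.S, h (r s) = Ot.row s := by
    intro s hs
    have hq : ∃ s' ∈ Ot.S, r s' = r s := ⟨s, hs, rfl⟩
    have hch := hq.choose_spec
    simp only [hh_def, dif_pos hq]
    exact row_eq_of_run_eq Ot M' hM' (Or.inl hch.1) (Or.inl hs) hch.2
  have himg : Ot.S.image Ot.row = (Ot.S.image r).image h := by
    rw [Finset.image_image]
    exact Finset.image_congr (fun s hs => (hh s hs).symm)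
  have hcard1 : Ot.numStates ≤ (Ot.S.image r).card := by
    rw [ObsTable.numStates, himg]; exact Finset.card_image_le
  have hcard2 : (Ot.S.image r).card ≤ Fintype.card Q := Finset.card_le_univ _
  have heq1 : (Ot.S.image r).card = Fintype.card Q :=
    le_antisymm hcard2 (hcard.trans hcard1)
  have heq2 : ((Ot.S.image r).image h).card = (Ot.S.image r).card := by
    rw [← himg]
    exact le_antisymm hcard1 (heq1.trans_le hcard)
  have hinj : Set.InjOn h (Ot.S.image r) := Finset.injOn_of_card_image_eq heq2
  have hsurj : ∀ q : Q, ∃ s ∈ Ot.S, r s = q := by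
    have huniv : Ot.S.image r = Finset.univ := Finset.eq_univ_of_card _ heq1
    intro q
    have : q ∈ Ot.S.image r := huniv ▸ Finset.mem_univ q
    exact Finset.mem_image.mp this
  set sel : Q → List σ := fun q => (hsurj q).choose with hsel_def
  have hsel : ∀ q : Q, sel q ∈ Ot.S ∧ r (sel q) = q := fun q => (hsurj q).choose_spec
  refine ⟨fun q => Ot.stateOf (sel q) (hsel q).1, ?_, ?_, ?_, ?_⟩
  · constructor
    · -- injective
      intro q1 q2 hφ
      have hrow : Ot.row (sel q1) = Ot.row (sel q2) := congrArg Subtype.val hφ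
      have h1 : h q1 = h q2 := by
        rw [← (hsel q1).2, ← (hsel q2).2, hh _ (hsel q1).1, hh _ (hsel q2).1, hrow]
      have m1 : q1 ∈ (Ot.S.image r : Set Q) := by
        simp only [Finset.coe_image, Set.mem_image]
        exact ⟨sel q1, (hsel q1).1, (hsel q1).2⟩
      have m2 : q2 ∈ (Ot.S.image r : Set Q) := by
        simp only [Finset.coe_image, Set.mem_image]
        exact ⟨sel q2, (hsel q2).1, (hsel q2).2⟩
      exact hinj m1 m2 h1
    · -- surjective
      rintro ⟨f, s, hs, hrow⟩
      refine ⟨r s, Subtype.ext ?_⟩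
      show Ot.row (sel (r s)) = f
      rw [← hrow]
      exact row_eq_of_run_eq Ot M' hM' (Or.inl (hsel (r s)).1) (Or.inl hs) (hsel (r s)).2
  · -- initial state
    apply Subtype.ext
    rw [hM.1]
    show Ot.row (sel M'.q0) = Ot.row []
    exact row_eq_of_run_eq Ot M' hM' (Or.inl (hsel M'.q0).1) (Or.inl Ot.nil_mem_S)
      ((hsel M'.q0).2)
  · -- transitions
    intro q a
    apply Subtype.ext
    rw [hM.2.1 (sel q) (hsel q).1 a]
    show Ot.row (sel (M'.δ q a)) = Ot.row (sel q ++ [a])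
    have hrun : r (sel q ++ [a]) = M'.δ q a := by
      show M'.run M'.q0 (sel q ++ [a]) = M'.δ q a
      have h2 : M'.run M'.q0 (sel q ++ [a]) = M'.δ (M'.run M'.q0 (sel q)) a := by
        simp [MooreMachine.run, List.foldl_append]
      rw [h2]
      exact congrFun (congrArg M'.δ (hsel q).2) a
    exact row_eq_of_run_eq Ot M' hM' (Or.inl (hsel (M'.δ q a)).1)
      (Or.inr ⟨sel q, (hsel q).1, a, rfl⟩)
      (((hsel (M'.δ q a)).2).trans hrun.symm)
  · -- outputs
    intro q
    rw [hM.2.2 (sel q) (hsel q).1]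
    have := hM' (sel q) (Or.inl (hsel q).1) [] Ot.nil_mem_E
    simp only [List.append_nil] at this
    rw [← this]
    exact congrArg M'.L (hsel q).2
end

section
/- Let (S, E, T) be a closed and consistent observation table over input alphabet Σ and output alphabet O, and let (Q̂, q̂0, δ̂, L̂) be its hypothesis Moore machine with n = |Q̂| states. Then (1) the hypothesis machine is consistent with the table, and (2) every Moore machine over (Σ, O) that is consistent with the table and is not isomorphic to the hypothesis machine has strictly more than n states. -/
universe u

/-- (1) The hypothesis machine of a closed and consistent observation table is
consistent with the table, and (2) every Moore machine consistent with the table that is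
not isomorphic to the hypothesis machine has strictly more than `n = |Q̂|` states. -/
theorem hypothesis_minimal_consistent {σ O : Type*} [Fintype σ] [Nonempty σ]
    [Fintype O] [Nonempty O] [DecidableEq O]
    (Ot : ObsTable σ O) (hclosed : Ot.Closed) (hcons : Ot.Consistent)
    (M : MooreMachine σ O Ot.HQ) (hM : Ot.IsHypothesis M) :
    M.ConsistentWith Ot ∧
      ∀ (Q : Type u) [Fintype Q] (M' : MooreMachine σ O Q),
        M'.ConsistentWith Ot → ¬(∃ φ : Q → Ot.HQ, MooreIso M' M φ) →
        Ot.numStates < Fintype.card Q := by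

  classical
  obtain ⟨hq0, hδ, hL⟩ := hM
  -- run along a suffix e starting from stateOf t
  have runE : ∀ (e : List σ), e ∈ Ot.E → ∀ t, ∀ ht : t ∈ Ot.S,
      M.L (M.run (Ot.stateOf t ht) e) = Ot.T (t ++ e) := by
    intro e
    induction e with
    | nil => intro _ t ht; simpa [MooreMachine.run] using hL t ht
    | cons a e' ih =>
      intro he t ht
      have he' : e' ∈ Ot.E := Ot.suffixClosed _ he e' ⟨[a], rfl⟩
      obtain ⟨t', ht', hrow⟩ := hclosed t ht a
      have hδeq : M.δ (Ot.stateOf t ht) a = Ot.stateOf t' ht' := by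
        apply Subtype.ext
        rw [hδ t ht a, hrow]; rfl
      have hrun : M.run (Ot.stateOf t ht) (a :: e') = M.run (Ot.stateOf t' ht') e' := by
        simp [MooreMachine.run, hδeq]
      rw [hrun, ih he' t' ht']
      have h2 := congrFun hrow ⟨e', he'⟩
      simp only [ObsTable.row] at h2
      simpa using h2.symm
  have runS : ∀ s, ∀ hs : s ∈ Ot.S, M.run M.q0 s = Ot.stateOf s hs := by
    intro s
    induction s using List.reverseRecOn with
    | nil => intro _; simpa [MooreMachine.run] using hq0
    | append_singleton s a ih =>
      intro hs
      have hsS : s ∈ Ot.S := Ot.prefixClosed _ hs s ⟨[a], rfl⟩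
      have h1 : M.run M.q0 (s ++ [a]) = M.δ (M.run M.q0 s) a := by
        simp [MooreMachine.run]
      rw [h1, ih hsS]
      apply Subtype.ext
      rw [hδ s hsS a]; rfl
  have part1 : M.ConsistentWith Ot := by
    intro s hsR e he
    rcases hsR with hs | ⟨t, ht, a, rfl⟩
    · have h1 : M.run M.q0 (s ++ e) = M.run (M.run M.q0 s) e := by
        simp [MooreMachine.run]
      rw [h1, runS s hs, runE e he s hs]
    · obtain ⟨t', ht', hrow⟩ := hclosed t ht a
      have h1 : M.run M.q0 (t ++ [a] ++ e) = M.run (M.δ (M.run M.q0 t) a) e := by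
        simp [MooreMachine.run]
      have hδeq : M.δ (Ot.stateOf t ht) a = Ot.stateOf t' ht' := by
        apply Subtype.ext; rw [hδ t ht a, hrow]; rfl
      rw [h1, runS t ht, hδeq, runE e he t' ht']
      have h2 := congrFun hrow ⟨e, he⟩
      simp only [ObsTable.row] at h2
      simpa using h2.symm
  refine ⟨part1, ?_⟩
  intro Q _ M' hM' hniso
  by_contra hlt
  push_neg at hlt
  -- key: equal runs give equal rows
  have key : ∀ t₁, Ot.InTableRows t₁ → ∀ t₂, Ot.InTableRows t₂ →
      M'.run M'.q0 t₁ = M'.run M'.q0 t₂ → Ot.row t₁ = Ot.row t₂ := by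
    intro t₁ h₁ t₂ h₂ heq
    funext e
    have e1 := hM' t₁ h₁ e.1 e.2
    have e2 := hM' t₂ h₂ e.1 e.2
    have r1 : M'.run M'.q0 (t₁ ++ e.1) = M'.run (M'.run M'.q0 t₁) e.1 := by
      simp [MooreMachine.run]
    have r2 : M'.run M'.q0 (t₂ ++ e.1) = M'.run (M'.run M'.q0 t₂) e.1 := by
      simp [MooreMachine.run]
    show Ot.T (t₁ ++ e.1) = Ot.T (t₂ ++ e.1)
    rw [← e1, ← e2, r1, r2, heq]
  have repspec : ∀ f : {g // g ∈ Ot.S.image Ot.row}, ∃ s, s ∈ Ot.S ∧ Ot.row s = f.1 := by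
    intro f
    obtain ⟨s, hs, h⟩ := Finset.mem_image.mp f.2
    exact ⟨s, hs, h⟩
  choose rep repS repRow using repspec
  set χ : {g // g ∈ Ot.S.image Ot.row} → Q := fun f => M'.run M'.q0 (rep f) with hχdef
  have χinj : Function.Injective χ := by
    intro f g h
    have hk := key (rep f) (Or.inl (repS f)) (rep g) (Or.inl (repS g)) h
    exact Subtype.ext (by rw [← repRow f, ← repRow g, hk])
  have hcard : Ot.numStates ≤ Fintype.card Q := by
    calc Ot.numStates = Fintype.card {g // g ∈ Ot.S.image Ot.row} :=
          (Fintype.card_coe _).symm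
      _ ≤ Fintype.card Q := Fintype.card_le_of_injective χ χinj
  have hceq : Fintype.card {g // g ∈ Ot.S.image Ot.row} = Fintype.card Q := by
    rw [Fintype.card_coe]
    exact le_antisymm (by simpa [ObsTable.numStates, Fintype.card_coe] using hcard) hlt
  have χbij : Function.Bijective χ :=
    (Fintype.bijective_iff_injective_and_card χ).mpr ⟨χinj, hceq⟩
  set eχ := Equiv.ofBijective χ χbij with heχ
  set ψ : {g // g ∈ Ot.S.image Ot.row} ≃ Ot.HQ :=
    Equiv.subtypeEquivRight (fun f => by
      constructor
      · intro hf; obtain ⟨s, hs, h⟩ := Finset.mem_image.mp hf; exact ⟨s, hs, h⟩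
      · intro ⟨s, hs, h⟩; exact Finset.mem_image.mpr ⟨s, hs, h⟩) with hψ
  have hψval : ∀ x, (ψ x).1 = x.1 := by
    intro x; rw [hψ]; rfl
  set φ : Q → Ot.HQ := fun q => ψ (eχ.symm q) with hφdef
  have φbij : Function.Bijective φ := (eχ.symm.trans ψ).bijective
  have φval : ∀ t, Ot.InTableRows t → (φ (M'.run M'.q0 t)).1 = Ot.row t := by
    intro t ht
    have hχ : χ (eχ.symm (M'.run M'.q0 t)) = M'.run M'.q0 t := eχ.apply_symm_apply _
    have hk := key (rep _) (Or.inl (repS _)) t ht hχ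
    rw [hφdef]
    simp only [hψval]
    rw [← repRow (eχ.symm (M'.run M'.q0 t)), hk]
  have χsurj := χbij.2
  apply hniso
  refine ⟨φ, φbij, ?_, ?_, ?_⟩
  · apply Subtype.ext
    have h0 : M'.q0 = M'.run M'.q0 [] := rfl
    rw [hq0, h0, φval [] (Or.inl Ot.nil_mem_S)]; rfl
  · intro q a
    obtain ⟨f, hf⟩ := χsurj q
    have hq : q = M'.run M'.q0 (rep f) := hf.symm
    have hrepS := repS f
    have hδ' : M'.δ q a = M'.run M'.q0 (rep f ++ [a]) := by
      rw [hq]; simp [MooreMachine.run]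
    have hφq : φ q = Ot.stateOf (rep f) hrepS := by
      apply Subtype.ext
      rw [hq, φval (rep f) (Or.inl hrepS)]; rfl
    apply Subtype.ext
    rw [hδ', φval (rep f ++ [a]) (Or.inr ⟨rep f, hrepS, a, rfl⟩), hφq,
      hδ (rep f) hrepS a]
  · intro q
    obtain ⟨f, hf⟩ := χsurj q
    have hq : q = M'.run M'.q0 (rep f) := hf.symm
    have hrepS := repS f
    have hφq : φ q = Ot.stateOf (rep f) hrepS := by
      apply Subtype.ext
      rw [hq, φval (rep f) (Or.inl hrepS)]; rfl
    rw [hφq, hL (rep f) hrepS, hq]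
    have := hM' (rep f) (Or.inl hrepS) [] Ot.nil_mem_E
    simpa using this.symm
end

section
/- Let (S, E, T) be a closed and consistent observation table over input alphabet Σ and output alphabet O, let (Q̂, q̂0, δ̂, L̂) be its hypothesis Moore machine with n = |Q̂| states, and let f : Σ* → O be a function computed by some Moore machine over (Σ, O). If there exists a counterexample sequence c with L̂(δ̂*(q̂0, c)) ≠ f(c), then at least one of the following holds: (a) every Moore machine over (Σ, O) computing f has strictly more than n states, or (b) there exist s ∈ S ∪ {s·σ : s ∈ S, σ ∈ Σ} and e ∈ E such that T(s·e) ≠ f(s·e). -/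
universe u v

lemma MooreMachine.run_append {σ O Q : Type*} (M : MooreMachine σ O Q) (q : Q)
    (w₁ w₂ : List σ) : M.run q (w₁ ++ w₂) = M.run (M.run q w₁) w₂ := by
  simp [MooreMachine.run, List.foldl_append]

/-- If `f` is computed by some Moore machine and there is a counterexample `c`
on which the hypothesis machine disagrees with `f`, then either (a) every Moore machine
computing `f` has strictly more than `n = |Q̂|` states, or (b) some table entry disagrees
with `f`. -/
theorem counterexample_dichotomy {σ O : Type*} [Fintype σ] [Nonempty σ]
    [Fintype O] [Nonempty O] [DecidableEq O]
    (Ot : ObsTable σ O) (hclosed : Ot.Closed) (hcons : Ot.Consistent)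
    (M : MooreMachine σ O Ot.HQ) (hM : Ot.IsHypothesis M)
    (f : List σ → O)
    (hf : ∃ (Q : Type u) (_ : Fintype Q) (M' : MooreMachine σ O Q), M'.Computes f)
    (c : List σ) (hc : M.L (M.run M.q0 c) ≠ f c) :
    (∀ (Q : Type v) [Fintype Q] (M' : MooreMachine σ O Q),
        M'.Computes f → Ot.numStates < Fintype.card Q) ∨
      (∃ s : List σ, Ot.InTableRows s ∧ ∃ e ∈ Ot.E, Ot.T (s ++ e) ≠ f (s ++ e)) := by
  classical
  by_cases hb : ∃ s : List σ, Ot.InTableRows s ∧ ∃ e ∈ Ot.E, Ot.T (s ++ e) ≠ f (s ++ e)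
  · exact Or.inr hb
  push_neg at hb
  left
  intro Q _ M' hcomp
  by_contra hle
  push_neg at hle
  obtain ⟨hq0, hδ, hL⟩ := hM
  set g : Q → ({e // e ∈ Ot.E} → O) := fun q e => M'.L (M'.run q e.1) with hg
  have hrow : ∀ s : List σ, Ot.InTableRows s → g (M'.run M'.q0 s) = Ot.row s := by
    intro s hs
    funext e
    have h1 := hb s hs e.1 e.2
    have h2 := hcomp (s ++ e.1)
    simp only [hg, ← M'.run_append]
    rw [← h2, ← h1]
    rfl
  -- representative map from rows to states of M'
  set rep : {r // r ∈ Ot.S.image Ot.row} → List σ :=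
    fun x => (Finset.mem_image.mp x.2).choose with hrep
  have hrepS : ∀ x, rep x ∈ Ot.S := fun x => (Finset.mem_image.mp x.2).choose_spec.1
  have hrepRow : ∀ x, Ot.row (rep x) = x.1 := fun x => (Finset.mem_image.mp x.2).choose_spec.2
  set h : {r // r ∈ Ot.S.image Ot.row} → Q := fun x => M'.run M'.q0 (rep x) with hh
  have hgh : ∀ x, g (h x) = x.1 := by
    intro x
    rw [hh]
    simp only
    rw [hrow _ (Or.inl (hrepS x)), hrepRow]
  have hinj : Function.Injective h := by
    intro x₁ x₂ hx
    have : x₁.1 = x₂.1 := by rw [← hgh x₁, ← hgh x₂, hx]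
    exact Subtype.ext this
  have hcard : Fintype.card {r // r ∈ Ot.S.image Ot.row} = Ot.numStates := by
    rw [ObsTable.numStates]; exact Fintype.card_coe _
  have hbij : Function.Bijective h := by
    rw [Fintype.bijective_iff_injective_and_card]
    refine ⟨hinj, le_antisymm (Fintype.card_le_of_injective h hinj) ?_⟩
    rw [hcard]; exact hle
  have ginj : Function.Injective g := by
    intro q₁ q₂ hq
    obtain ⟨x₁, rfl⟩ := hbij.2 q₁
    obtain ⟨x₂, rfl⟩ := hbij.2 q₂
    rw [hgh x₁, hgh x₂] at hq
    exact congrArg h (Subtype.ext hq)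
  -- main invariant
  have hmain : ∀ w : List σ, ∃ s, ∃ hs : s ∈ Ot.S,
      M'.run M'.q0 w = M'.run M'.q0 s ∧ M.run M.q0 w = Ot.stateOf s hs := by
    intro w
    induction w using List.reverseRecOn with
    | nil => exact ⟨[], Ot.nil_mem_S, rfl, hq0⟩
    | append_singleton w a ih =>
      obtain ⟨s, hs, h1, h2⟩ := ih
      obtain ⟨s', hs', hrow'⟩ := hclosed s hs a
      refine ⟨s', hs', ?_, ?_⟩
      · have e1 : M'.run M'.q0 (w ++ [a]) = M'.run M'.q0 (s ++ [a]) := by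
          rw [M'.run_append, M'.run_append, h1]
        have e2 : g (M'.run M'.q0 (s ++ [a])) = g (M'.run M'.q0 s') := by
          rw [hrow _ (Or.inr ⟨s, hs, a, rfl⟩), hrow _ (Or.inl hs'), hrow']
        rw [e1, ginj e2]
      · have e3 : M.run M.q0 (w ++ [a]) = M.δ (Ot.stateOf s hs) a := by
          rw [M.run_append, h2]; rfl
        rw [e3]
        exact Subtype.ext (by rw [hδ s hs a, hrow']; rfl)
  obtain ⟨s, hs, h1, h2⟩ := hmain c
  have e4 : M.L (M.run M.q0 c) = Ot.T s := by rw [h2]; exact hL s hs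
  have e5 : f c = f s := by rw [hcomp c, hcomp s, h1]
  have e6 : Ot.T s = f s := by
    have := hb s (Or.inl hs) [] Ot.nil_mem_E
    simpa using this
  exact hc (by rw [e4, e6, ← e5])
end

section
/- Let (S, E, T) be a closed and consistent observation table over input alphabet Σ and output alphabet O, let (Q̂, q̂0, δ̂, L̂) be its hypothesis Moore machine with n = |Q̂| states, and let f : Σ* → O be a function computed by some Moore machine over (Σ, O) with at most n states. If T(s·e) = f(s·e) for every s ∈ S ∪ {s·σ : s ∈ S, σ ∈ Σ} and every e ∈ E, then the hypothesis machine computes f exactly: for every sequence w, L̂(δ̂*(q̂0, w)) = f(w). -/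
universe u

/-- If `f` is computed by some Moore machine with at most `n = |Q̂|` states and
the table agrees with `f` on all its entries, then the hypothesis machine computes `f`
exactly: `L̂(δ̂*(q̂0, w)) = f(w)` for every sequence `w`. -/
theorem hypothesis_computes_target {σ O : Type*} [Fintype σ] [Nonempty σ]
    [Fintype O] [Nonempty O] [DecidableEq O]
    (Ot : ObsTable σ O) (hclosed : Ot.Closed) (hcons : Ot.Consistent)
    (M : MooreMachine σ O Ot.HQ) (hM : Ot.IsHypothesis M)
    (f : List σ → O)
    (hf : ∃ (Q : Type u) (_ : Fintype Q) (M' : MooreMachine σ O Q),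
        Fintype.card Q ≤ Ot.numStates ∧ M'.Computes f)
    (hagree : ∀ s : List σ, Ot.InTableRows s → ∀ e ∈ Ot.E, Ot.T (s ++ e) = f (s ++ e)) :
    ∀ w : List σ, M.L (M.run M.q0 w) = f w := by
  classical
  obtain ⟨Q, hQfin, M', hcard, hcomp⟩ := hf
  letI := hQfin
  have hcard2 : Fintype.card Q ≤ Ot.numStates := hcard
  clear hcard
  set ψ : Q → ({e // e ∈ Ot.E} → O) := fun q e => M'.L (M'.run q e.1) with hψ
  have hrow : ∀ s : List σ, Ot.InTableRows s → Ot.row s = ψ (M'.run M'.q0 s) := by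
    intro s hs
    funext e
    show Ot.T (s ++ e.1) = M'.L (M'.run (M'.run M'.q0 s) e.1)
    rw [hagree s hs e.1 e.2, hcomp (s ++ e.1)]
    simp [MooreMachine.run, List.foldl_append]
  have hsub : Ot.S.image Ot.row ⊆ Finset.univ.image ψ := by
    intro r hr
    simp only [Finset.mem_image] at hr ⊢
    obtain ⟨s, hs, rfl⟩ := hr
    exact ⟨M'.run M'.q0 s, Finset.mem_univ _, (hrow s (Or.inl hs)).symm⟩
  have hcardeq : (Finset.univ.image ψ).card = (Finset.univ : Finset Q).card := by
    have h1 : Ot.numStates ≤ (Finset.univ.image ψ).card := Finset.card_le_card hsub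
    have h2 : (Finset.univ.image ψ).card ≤ (Finset.univ : Finset Q).card :=
      Finset.card_image_le
    rw [Finset.card_univ]
    rw [Finset.card_univ] at h2
    omega
  have hinj : Function.Injective ψ := by
    have := Finset.card_image_iff.mp hcardeq
    intro a b hab
    exact this (Finset.mem_univ a) (Finset.mem_univ b) hab
  have key : ∀ w : List σ, (M.run M.q0 w).1 = ψ (M'.run M'.q0 w) := by
    intro w
    induction w using List.reverseRecOn with
    | nil =>
      show (M.q0).1 = ψ (M'.q0)
      rw [hM.1]
      have := hrow [] (Or.inl Ot.nil_mem_S)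
      simpa [MooreMachine.run, ObsTable.stateOf] using this
    | append_singleton w a ih =>
      obtain ⟨s, hs, hrs⟩ := (M.run M.q0 w).2
      have hq : M.run M.q0 w = Ot.stateOf s hs := Subtype.ext hrs.symm
      have hws : M'.run M'.q0 s = M'.run M'.q0 w := by
        apply hinj
        rw [← hrow s (Or.inl hs), hrs, ih]
      have hL : (M.run M.q0 (w ++ [a])).1 = Ot.row (s ++ [a]) := by
        have : M.run M.q0 (w ++ [a]) = M.δ (M.run M.q0 w) a := by
          simp [MooreMachine.run, List.foldl_append]
        rw [this, hq]
        exact hM.2.1 s hs a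
      have hR : ψ (M'.run M'.q0 (w ++ [a])) = Ot.row (s ++ [a]) := by
        have hws' : List.foldl M'.δ M'.q0 w = List.foldl M'.δ M'.q0 s := hws.symm
        have h1 : M'.run M'.q0 (w ++ [a]) = M'.run M'.q0 (s ++ [a]) := by
          simp only [MooreMachine.run, List.foldl_append]
          rw [hws']
        rw [h1, ← hrow (s ++ [a]) (Or.inr ⟨s, hs, a, rfl⟩)]
      rw [hL, hR]
  intro w
  obtain ⟨s, hs, hrs⟩ := (M.run M.q0 w).2
  have hq : M.run M.q0 w = Ot.stateOf s hs := Subtype.ext hrs.symm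
  have h1 : M.L (M.run M.q0 w) = Ot.T s := by rw [hq]; exact hM.2.2 s hs
  have h2 : Ot.T s = ψ (M'.run M'.q0 w) ⟨[], Ot.nil_mem_E⟩ := by
    have := congrFun (key w) ⟨[], Ot.nil_mem_E⟩
    rw [← this, ← hrs]
    simp [ObsTable.row]
  rw [h1, h2, hcomp w]
  show M'.L (M'.run (M'.run M'.q0 w) []) = _
  rfl
end
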